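/- The family {f_{mn} : m, n ∈ ℕ} is orthonormal in L²(ℝ²) with respect to the inner product ⟨f, g⟩ := ½ ∫ conj(f(u)) g(u) du: for all m, n, k, l ∈ ℕ, ½ ∫ conj(f_{mn}(u)) f_{kl}(u) du = 1 if (m,n) = (k,l), and = 0 otherwise. -/

import Mathlib

open MeasureTheory SchwartzMap Complex

noncomputable section

def symp2 (u v : ℝ × ℝ) : ℝ := u.1 * v.2 - u.2 * v.1

def mes2 : Measure (ℝ × ℝ) := (ENNReal.ofReal (2 * Real.pi))⁻¹ • (volume : Measure (ℝ × ℝ))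

def twProd2 (f g : ℝ × ℝ → ℂ) : ℝ × ℝ → ℂ := fun u =>
  ∫ s, ∫ t, f (u + s) * g (u + t) * Complex.exp (Complex.I * (symp2 s t : ℂ)) ∂mes2 ∂mes2

/-- The Gaussian `f₀(q,p) = 2 e^{-(q²+p²)/2}`. -/
def f0 (u : ℝ × ℝ) : ℂ := 2 * Complex.exp (-((u.1 ^ 2 + u.2 ^ 2 : ℝ) : ℂ) / 2)

/-- `a = (q + ip)/√2`. -/
def aop (u : ℝ × ℝ) : ℂ := ((u.1 : ℂ) + Complex.I * (u.2 : ℂ)) / (Real.sqrt 2 : ℂ)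

/-- `ā = (q - ip)/√2`. -/
def abar (u : ℝ × ℝ) : ℂ := ((u.1 : ℂ) - Complex.I * (u.2 : ℂ)) / (Real.sqrt 2 : ℂ)

/-- The twisted Hermite functions `f_{mn}`. -/
def fmn (m n : ℕ) : ℝ × ℝ → ℂ := fun u =>
  ((Real.sqrt (2 ^ (m + n) * m.factorial * n.factorial) : ℝ) : ℂ)⁻¹ *
    ∑ k ∈ Finset.range (min m n + 1),
      (-1 : ℂ) ^ k * (m.choose k : ℂ) * (n.choose k : ℂ) * (k.factorial : ℂ) *
        2 ^ (m + n - k) * abar u ^ (m - k) * aop u ^ (n - k) * f0 u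


open Real Set Finset


lemma altSum : ∀ (k N r : ℕ), k ≤ N →
    ∑ i ∈ range (k+1), (-1 : ℂ)^i * (k.choose i) * ((N-i).choose r)
      = if k ≤ r then (((N-k).choose (r-k) : ℕ) : ℂ) else 0 := by
  intro k
  induction k with
  | zero => intro N r _; simp
  | succ k ih =>
    intro N r hN
    have hkN : k ≤ N - 1 := by omega
    have step : ∑ i ∈ range (k+1+1), (-1:ℂ)^i * ((k+1).choose i) * ((N-i).choose r)
        = ∑ i ∈ range (k+1), (-1:ℂ)^i * (k.choose i)
            * (((N-i).choose r : ℂ) - ((N-(i+1)).choose r : ℂ)) := by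
      rw [Finset.sum_range_succ' (fun i => (-1:ℂ)^i * ((k+1).choose i) * ((N-i).choose r))]
      have e1 : ∀ i, ((k+1).choose (i+1) : ℂ) = (k.choose i : ℂ) + (k.choose (i+1) : ℂ) := by
        intro i; rw [Nat.choose_succ_succ]; push_cast; ring
      simp only [e1]
      have e2 : ∑ i ∈ range (k+1), (-1:ℂ)^(i+1) * ((k.choose i : ℂ) + (k.choose (i+1)))
            * ((N-(i+1)).choose r)
          = ∑ i ∈ range (k+1), (-1:ℂ)^(i+1) * (k.choose i) * ((N-(i+1)).choose r)
            + ∑ i ∈ range (k+1), (-1:ℂ)^(i+1) * (k.choose (i+1)) * ((N-(i+1)).choose r) := by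
        rw [← Finset.sum_add_distrib]; apply Finset.sum_congr rfl; intro i _; ring
      simp only [pow_succ] at e2 ⊢
      rw [e2]
      have e3 : ∑ i ∈ range (k+1), (-1:ℂ)^i * (-1) * (k.choose (i+1)) * ((N-(i+1)).choose r)
            + ((k+1).choose 0 : ℂ) * ((N-0).choose r)
          = ∑ i ∈ range (k+2), (-1:ℂ)^i * (k.choose i) * ((N-i).choose r) := by
        rw [Finset.sum_range_succ' (fun i => (-1:ℂ)^i * (k.choose i) * ((N-i).choose r))]
        simp only [pow_succ]
        push_cast
        ring_nf
        simp
      have e4 : ∑ i ∈ range (k+2), (-1:ℂ)^i * (k.choose i) * ((N-i).choose r)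
          = ∑ i ∈ range (k+1), (-1:ℂ)^i * (k.choose i) * ((N-i).choose r) := by
        rw [Finset.sum_range_succ]
        simp [Nat.choose_succ_self]
      have e6 : ∑ i ∈ range (k+1), (-1:ℂ)^i * (k.choose i)
            * ((((N-i).choose r) : ℂ) - ((N-(i+1)).choose r : ℂ))
          = (∑ i ∈ range (k+1), (-1:ℂ)^i * (k.choose i) * ((N-i).choose r))
            + ∑ i ∈ range (k+1), (-1:ℂ)^i * (-1) * (k.choose i) * ((N-(i+1)).choose r) := by
        rw [← Finset.sum_add_distrib]; exact Finset.sum_congr rfl fun i _ => by ring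
      linear_combination e3 + e4 - e6
    rw [step]
    rcases r with _ | r'
    · simp
    · have e5 : ∀ i ∈ range (k+1),
          (-1:ℂ)^i * (k.choose i) * (((N-i).choose (r'+1) : ℂ) - ((N-(i+1)).choose (r'+1) : ℂ))
            = (-1:ℂ)^i * (k.choose i) * (((N-1-i).choose r' : ℂ)) := by
        intro i hi
        simp only [Finset.mem_range] at hi
        have h1 : N - i = (N-1-i) + 1 := by omega
        have h2 : N - (i+1) = N-1-i := by omega
        rw [h1, h2, Nat.choose_succ_succ]
        push_cast
        ring
      rw [Finset.sum_congr rfl e5, ih (N-1) r' hkN]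
      have h6 : N - 1 - k = N - (k+1) := by omega
      by_cases h7 : k ≤ r'
      · rw [if_pos h7, if_pos (by omega),
            show N - (k+1) = N - 1 - k by omega, show r'+1 - (k+1) = r' - k by omega]
      · rw [if_neg h7, if_neg (by omega)]

lemma natfact {l M i : ℕ} (hl : l ≤ M) (hi : i ≤ M) :
    l.choose i * i.factorial * (M - i).factorial
      = l.factorial * (M - l).factorial * ((M - i).choose (M - l)) := by
  rcases le_or_gt i l with h | h
  · have h1 : l - i ≤ M - i := by omega
    have e1 : (M - i) - (l - i) = M - l := by omega
    have e2 := Nat.choose_mul_factorial_mul_factorial h1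
    have e3 := Nat.choose_mul_factorial_mul_factorial h
    have e4 : (M - i).choose (M - l) = (M - i).choose (l - i) := by
      rw [← e1]; exact Nat.choose_symm h1
    rw [e1] at e2
    calc l.choose i * i.factorial * (M-i).factorial
        = l.choose i * i.factorial * ((M-i).choose (l-i) * (l-i).factorial
            * (M-l).factorial) := by rw [e2]
      _ = (l.choose i * i.factorial * (l-i).factorial) * ((M-i).choose (l-i))
            * (M-l).factorial := by ring
      _ = _ := by rw [e3, e4]; ring
  · rw [Nat.choose_eq_zero_of_lt h, Nat.choose_eq_zero_of_lt (by omega : M - i < M - l)]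
    simp

lemma innerSum (k l M : ℕ) (hk : k ≤ M) (hl : l ≤ M) :
    ∑ i ∈ range (min k l + 1),
        (-1:ℂ)^i * (k.choose i) * (l.choose i) * (i.factorial) * ((M - i).factorial)
      = (l.factorial : ℂ) * ((M - l).factorial) *
          (if k ≤ M - l then (((M - k).choose (M - l - k) : ℕ) : ℂ) else 0) := by
  have hsub : range (min k l + 1) ⊆ range (k+1) := by
    apply Finset.range_subset_range.mpr; omega
  rw [Finset.sum_subset hsub ?h0]
  case h0 =>
    intro i hi hni
    simp only [Finset.mem_range] at hi hni
    have : l < i := by omega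
    simp [Nat.choose_eq_zero_of_lt this]
  have e : ∀ i ∈ range (k+1),
      (-1:ℂ)^i * (k.choose i) * (l.choose i) * i.factorial * ((M-i).factorial)
        = (l.factorial : ℂ) * ((M-l).factorial)
            * ((-1:ℂ)^i * (k.choose i) * ((M-i).choose (M-l))) := by
    intro i hi
    simp only [Finset.mem_range] at hi
    have hiM : i ≤ M := by omega
    have h1 := natfact hl hiM
    have h2 := congrArg (Nat.cast : ℕ → ℂ) h1
    push_cast at h2
    linear_combination ((-1:ℂ)^i * (k.choose i)) * h2
  rw [Finset.sum_congr rfl e, ← Finset.mul_sum, altSum k M (M-l) hk]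

lemma TT (m n k l : ℕ) (h : n + k = m + l) :
    ∑ j ∈ range (min m n + 1), ∑ i ∈ range (min k l + 1),
      (-1:ℂ)^j * (m.choose j) * (n.choose j) * (j.factorial) *
        ((-1:ℂ)^i * (k.choose i) * (l.choose i) * (i.factorial)) *
          ((((n - j) + (k - i)).factorial : ℕ) : ℂ)
      = if m = k then ((m.factorial * n.factorial : ℕ) : ℂ) else 0 := by
  have outer : ∀ j ∈ range (min m n + 1),
      ∑ i ∈ range (min k l + 1),
        (-1:ℂ)^j * (m.choose j) * (n.choose j) * (j.factorial) *
          ((-1:ℂ)^i * (k.choose i) * (l.choose i) * (i.factorial)) *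
            ((((n - j) + (k - i)).factorial : ℕ) : ℂ)
      = ((-1:ℂ)^j * (m.choose j) * (n.choose j) * (j.factorial)) *
          ((l.factorial : ℂ) * (((m - j).factorial : ℕ) : ℂ) *
            (if k ≤ m - j then (((n - j).choose (m - j - k) : ℕ) : ℂ) else 0)) := by
    intro j hj
    simp only [Finset.mem_range] at hj
    have hjm : j ≤ m := by omega
    have hjn : j ≤ n := by omega
    set M := n + k - j with hM
    have hkM : k ≤ M := by omega
    have hlM : l ≤ M := by omega
    have hMl : M - l = m - j := by omega
    have hMk : M - k = n - j := by omega
    have e : ∀ i ∈ range (min k l + 1),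
        (-1:ℂ)^j * (m.choose j) * (n.choose j) * (j.factorial) *
          ((-1:ℂ)^i * (k.choose i) * (l.choose i) * (i.factorial)) *
            ((((n - j) + (k - i)).factorial : ℕ) : ℂ)
        = ((-1:ℂ)^j * (m.choose j) * (n.choose j) * (j.factorial)) *
            ((-1:ℂ)^i * (k.choose i) * (l.choose i) * (i.factorial) * ((M - i).factorial)) := by
      intro i hi
      simp only [Finset.mem_range] at hi
      have : (n - j) + (k - i) = M - i := by omega
      rw [this]; ring
    rw [Finset.sum_congr rfl e, ← Finset.mul_sum, innerSum k l M hkM hlM, hMl, hMk]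
  rw [Finset.sum_congr rfl outer]
  rcases le_or_gt k m with hkm | hkm
  · set d := m - k with hd
    have hdn : d ≤ n := by omega
    have e2 : ∀ j ∈ range (min m n + 1),
        ((-1:ℂ)^j * (m.choose j) * (n.choose j) * (j.factorial)) *
          ((l.factorial : ℂ) * (((m - j).factorial : ℕ) : ℂ) *
            (if k ≤ m - j then (((n - j).choose (m - j - k) : ℕ) : ℂ) else 0))
        = ((m.factorial : ℂ) * (l.factorial : ℂ) * ((n.choose d : ℕ) : ℂ)) *
            ((-1:ℂ)^j * ((d.choose j : ℕ) : ℂ)) := by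
      intro j hj
      simp only [Finset.mem_range] at hj
      have hjm : j ≤ m := by omega
      have hjn : j ≤ n := by omega
      rcases le_or_gt j d with hjd | hjd
      · rw [if_pos (by omega), show m - j - k = d - j by omega]
        have h1 := Nat.choose_mul (n := n) hjd  -- n.choose d * d.choose j = n.choose j * (n-d... )
        have h2 := Nat.choose_mul_factorial_mul_factorial hjm
        have c1 := congrArg (Nat.cast : ℕ → ℂ) h1
        have c2 := congrArg (Nat.cast : ℕ → ℂ) h2
        push_cast at c1 c2
        linear_combination ((-1:ℂ)^j * (l.factorial : ℂ) * ((n.choose j : ℕ) : ℂ) *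
            (((n-j).choose (d-j) : ℕ) : ℂ)) * c2
          - ((-1:ℂ)^j * (l.factorial : ℂ) * ((m.factorial : ℕ) : ℂ)) * c1
      · rw [if_neg (by omega), Nat.choose_eq_zero_of_lt hjd]
        simp
    rw [Finset.sum_congr rfl e2, ← Finset.mul_sum]
    have hsub2 : range (d + 1) ⊆ range (min m n + 1) := by
      apply Finset.range_subset_range.mpr; omega
    rw [← Finset.sum_subset hsub2 (by
      intro j hj hnj
      simp only [Finset.mem_range] at hj hnj
      rw [Nat.choose_eq_zero_of_lt (by omega)]
      simp)]
    have alt : ∑ j ∈ range (d + 1), (-1:ℂ)^j * ((d.choose j : ℕ) : ℂ)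
        = if d = 0 then 1 else 0 := by
      have := Int.alternating_sum_range_choose (n := d)
      have := congrArg (Int.cast : ℤ → ℂ) this
      push_cast at this
      rw [this]
    rw [alt]
    rcases eq_or_ne m k with rfl | hmk
    · have : n = l := by omega
      subst this
      rw [if_pos rfl, if_pos (by omega : d = 0)]
      simp [hd]
    · rw [if_neg hmk, if_neg (by omega)]
      ring
  · have e3 : ∀ j ∈ range (min m n + 1),
        ((-1:ℂ)^j * (m.choose j) * (n.choose j) * (j.factorial)) *
          ((l.factorial : ℂ) * (((m - j).factorial : ℕ) : ℂ) *
            (if k ≤ m - j then (((n - j).choose (m - j - k) : ℕ) : ℂ) else 0)) = 0 := by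
      intro j hj
      rw [if_neg (by omega)]
      ring
    rw [Finset.sum_congr rfl e3, if_neg (by omega)]
    simp

lemma sqrt2_ne : ((Real.sqrt 2 : ℝ) : ℂ) ≠ 0 := by
  simp [Real.sqrt_eq_zero']

lemma habar (r θ : ℝ) :
    abar (r * Real.cos θ, r * Real.sin θ)
      = (r : ℂ) * Complex.exp (-(θ:ℂ)*Complex.I) / (Real.sqrt 2 : ℂ) := by
  unfold abar
  rw [show -(θ:ℂ)*Complex.I = (-θ:ℂ)*Complex.I by ring, Complex.exp_mul_I]
  push_cast
  rw [Complex.cos_neg, Complex.sin_neg, ← Complex.ofReal_cos, ← Complex.ofReal_sin]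
  ring

lemma haop (r θ : ℝ) :
    aop (r * Real.cos θ, r * Real.sin θ)
      = (r : ℂ) * Complex.exp ((θ:ℂ)*Complex.I) / (Real.sqrt 2 : ℂ) := by
  unfold aop
  rw [show (θ:ℂ)*Complex.I = (θ:ℂ)*Complex.I by ring, Complex.exp_mul_I]
  push_cast
  rw [← Complex.ofReal_cos, ← Complex.ofReal_sin]
  ring

lemma hf0polar (r θ : ℝ) :
    f0 (r * Real.cos θ, r * Real.sin θ) = 2 * Complex.exp (-(r:ℂ)^2/2) := by
  unfold f0
  have h : (r*Real.cos θ)^2 + (r*Real.sin θ)^2 = r^2 := by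
    have := Real.sin_sq_add_cos_sq θ; nlinarith [this]
  simp only [h]
  push_cast
  ring_nf

lemma radial_int (A : ℕ) :
    ∫ r in Ioi (0:ℝ), r ^ (2*A+1) * Real.exp (-r^2) = (A.factorial : ℝ) / 2 := by
  have h1 : ∀ x:ℝ, x ^ (2*A+1) = x ^ (((2*A+1 : ℕ)):ℝ) :=
    fun x => (Real.rpow_natCast x _).symm
  have h2 : ∀ x:ℝ, x ^ (2:ℕ) = x ^ ((2:ℝ)) := fun x => by
    rw [show (2:ℝ) = ((2:ℕ):ℝ) by norm_num, Real.rpow_natCast]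
  calc ∫ r in Ioi (0:ℝ), r ^ (2*A+1) * Real.exp (-r^2)
      = ∫ r in Ioi (0:ℝ), r ^ (((2*A+1:ℕ)):ℝ) * Real.exp (-r ^ ((2:ℝ))) := by
        refine setIntegral_congr_fun measurableSet_Ioi (fun x _ => ?_)
        rw [← h1, ← h2]
    _ = (1/2) * Real.Gamma ((((2*A+1:ℕ):ℝ) + 1)/2) := by
        exact integral_rpow_mul_exp_neg_rpow (by norm_num) (by have := Nat.cast_nonneg (α := ℝ) (2*A+1); linarith)
    _ = (A.factorial : ℝ) / 2 := by
        have : (((2*A+1:ℕ):ℝ) + 1)/2 = (A:ℝ) + 1 := by push_cast; ring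
        rw [this, Real.Gamma_nat_eq_factorial A]
        ring

lemma angular_eq (A B : ℕ) (θ : ℝ) :
    Complex.exp (-(θ:ℂ)*Complex.I)^A * Complex.exp ((θ:ℂ)*Complex.I)^B
      = Complex.exp (((((B:ℤ) - (A:ℤ) : ℤ)) : ℂ) * Complex.I * θ) := by
  rw [← Complex.exp_nat_mul, ← Complex.exp_nat_mul, ← Complex.exp_add]
  congr 1
  push_cast
  ring

lemma angular_int_ne (A B : ℕ) (h : A ≠ B) :
    ∫ θ in Ioo (-Real.pi) Real.pi,
      Complex.exp (-(θ:ℂ)*Complex.I)^A * Complex.exp ((θ:ℂ)*Complex.I)^B = 0 := by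
  simp only [angular_eq]
  set c : ℂ := ((((B:ℤ) - (A:ℤ) : ℤ)) : ℂ) * Complex.I with hc
  have hcne : c ≠ 0 := by
    apply mul_ne_zero _ Complex.I_ne_zero
    rw [Ne, Int.cast_eq_zero, sub_eq_zero]
    exact_mod_cast fun hh => h (by exact_mod_cast hh.symm)
  have hle : -Real.pi ≤ Real.pi := by linarith [Real.pi_pos]
  rw [← integral_Ioc_eq_integral_Ioo]
  rw [← intervalIntegral.integral_of_le hle]
  rw [integral_exp_mul_complex hcne]
  have key : Complex.exp (c * (Real.pi:ℂ)) = Complex.exp (c * ((-Real.pi:ℝ) : ℂ)) := by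
    have e : c * (Real.pi:ℂ) = c * ((-Real.pi:ℝ):ℂ)
        + ((((B:ℤ) - (A:ℤ) : ℤ)) : ℂ) * (2 * (Real.pi:ℂ) * Complex.I) := by
      rw [hc]; push_cast; ring
    rw [e, Complex.exp_add, Complex.exp_int_mul_two_pi_mul_I, mul_one]
  rw [key, sub_self, zero_div]

lemma angular_int_eq (A : ℕ) :
    ∫ θ in Ioo (-Real.pi) Real.pi,
      Complex.exp (-(θ:ℂ)*Complex.I)^A * Complex.exp ((θ:ℂ)*Complex.I)^A
      = ((2*Real.pi : ℝ) : ℂ) := by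
  have h : ∀ θ:ℝ, Complex.exp (-(θ:ℂ)*Complex.I)^A * Complex.exp ((θ:ℂ)*Complex.I)^A = 1 := by
    intro θ
    rw [← mul_pow, ← Complex.exp_add]
    ring_nf
    simp
  simp only [h]
  rw [setIntegral_const, measureReal_def, Real.volume_Ioo]
  rw [ENNReal.toReal_ofReal (by linarith [Real.pi_pos])]
  rw [real_smul, mul_one]
  push_cast
  ring

lemma key (A B : ℕ) :
    ∫ u, abar u ^ A * aop u ^ B * (f0 u * f0 u) ∂mes2
      = if A = B then 2 * (A.factorial : ℂ) / 2 ^ A else 0 := by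
  have hpi := Real.pi_pos
  rw [mes2, integral_smul_measure]
  rw [← integral_comp_polarCoord_symm (fun u => abar u ^ A * aop u ^ B * (f0 u * f0 u))]
  have hfun : ∀ z : ℝ × ℝ,
      z.1 • ((fun u => abar u ^ A * aop u ^ B * (f0 u * f0 u)) (polarCoord.symm z))
      = (fun r : ℝ => (r:ℂ)^(A+B+1) * Complex.exp (-(r:ℂ)^2)
            * (4 / ((Real.sqrt 2 : ℝ):ℂ)^(A+B))) z.1
        * (fun θ : ℝ => Complex.exp (-(θ:ℂ)*Complex.I)^A
            * Complex.exp ((θ:ℂ)*Complex.I)^B) z.2 := by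
    rintro ⟨r, θ⟩
    simp only [polarCoord_symm_apply]
    rw [habar, haop, hf0polar, Complex.real_smul]
    have e1 : Complex.exp (-(r:ℂ)^2/2) * Complex.exp (-(r:ℂ)^2/2)
        = Complex.exp (-(r:ℂ)^2) := by
      rw [← Complex.exp_add]; ring_nf
    simp only [← e1]
    rw [div_pow, div_pow, mul_pow, mul_pow]
    field_simp [sqrt2_ne]
    ring
  rw [setIntegral_congr_fun polarCoord.open_target.measurableSet (fun z _ => hfun z)]
  rw [polarCoord_target, Measure.volume_eq_prod,
    setIntegral_prod_mul (fun r : ℝ => (r:ℂ)^(A+B+1) * Complex.exp (-(r:ℂ)^2)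
        * (4 / ((Real.sqrt 2 : ℝ):ℂ)^(A+B)))
      (fun θ : ℝ => Complex.exp (-(θ:ℂ)*Complex.I)^A * Complex.exp ((θ:ℂ)*Complex.I)^B)
      (Set.Ioi (0:ℝ)) (Set.Ioo (-Real.pi) Real.pi)]
  rcases eq_or_ne A B with rfl | hAB
  · rw [if_pos rfl, angular_int_eq A]
    have hrad : ∫ r in Ioi (0:ℝ),
        (r:ℂ)^(A+A+1) * Complex.exp (-(r:ℂ)^2) * (4 / ((Real.sqrt 2 : ℝ):ℂ)^(A+A))
        = (((A.factorial : ℝ)/2 : ℝ) : ℂ) * (4 / ((Real.sqrt 2 : ℝ):ℂ)^(A+A)) := by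
      rw [integral_mul_const]
      congr 1
      have e2 : ∀ r : ℝ, (r:ℂ)^(A+A+1) * Complex.exp (-(r:ℂ)^2)
          = (((r^(2*A+1) * Real.exp (-r^2) : ℝ)) : ℂ) := by
        intro r
        push_cast
        ring_nf
      simp only [e2]
      rw [← radial_int A]
      exact integral_ofReal
    rw [hrad]
    have hs2 : ((Real.sqrt 2 : ℝ):ℂ)^(A+A) = 2^A := by
      rw [show A+A = 2*A by ring, pow_mul]
      norm_cast
      rw [Real.sq_sqrt (by norm_num : (0:ℝ) ≤ 2)]
      push_cast
      ring
    rw [hs2, ENNReal.toReal_inv, ENNReal.toReal_ofReal (by linarith)]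
    rw [Complex.real_smul]
    push_cast
    have h2A : (2:ℂ)^A ≠ 0 := pow_ne_zero _ two_ne_zero
    have hpi' : (Real.pi:ℂ) ≠ 0 := by exact_mod_cast Real.pi_ne_zero
    field_simp
    ring
  · rw [if_neg hAB, angular_int_ne A B hAB, mul_zero, smul_zero]

lemma int1Dpow (M : ℕ) : Integrable (fun x : ℝ => x^M * Real.exp (-x^2)) := by
  have h := integrable_rpow_mul_exp_neg_mul_sq (b := 1) one_pos
    (s := ((M : ℕ) : ℝ)) (by have := Nat.cast_nonneg (α := ℝ) M; linarith)
  simpa [Real.rpow_natCast, neg_mul, one_mul] using h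

lemma int1D (N : ℕ) : Integrable (fun x : ℝ => (1+x^2)^N * Real.exp (-x^2)) := by
  have e : (fun x : ℝ => (1+x^2)^N * Real.exp (-x^2))
      = fun x => ∑ i ∈ Finset.range (N+1),
          (N.choose i : ℝ) * (x^(2*i) * Real.exp (-x^2)) := by
    funext x
    rw [show (1+x^2 : ℝ) = x^2 + 1 by ring, add_pow, Finset.sum_mul]
    apply Finset.sum_congr rfl
    intro i _
    rw [one_pow, ← pow_mul]
    ring_nf
  rw [e]
  apply integrable_finset_sum
  intro i _
  exact (int1Dpow (2*i)).const_mul _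

lemma norm_f0 (u : ℝ × ℝ) : ‖f0 u‖ = 2 * Real.exp (-(u.1^2+u.2^2)/2) := by
  unfold f0
  rw [show (-((u.1 ^ 2 + u.2 ^ 2 : ℝ) : ℂ)) / 2 = (((-(u.1^2+u.2^2)/2 : ℝ)) : ℂ) by
    push_cast; ring]
  rw [norm_mul, Complex.norm_exp,
    Complex.ofReal_re]
  norm_num

lemma norm_abar (u : ℝ × ℝ) : ‖abar u‖ ≤ 2*(1+u.1^2)*(1+u.2^2) := by
  unfold abar
  rw [norm_div]
  have h1 : ‖((u.1 : ℂ) - Complex.I * (u.2 : ℂ))‖ ≤ ‖(u.1:ℂ)‖ + ‖Complex.I * (u.2:ℂ)‖ :=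
    norm_sub_le _ _
  have h2 : ‖(u.1:ℂ)‖ = |u.1| := by rw [Complex.norm_real, Real.norm_eq_abs]
  have h3 : ‖Complex.I * (u.2:ℂ)‖ = |u.2| := by
    rw [norm_mul, Complex.norm_I, one_mul,
      Complex.norm_real, Real.norm_eq_abs]
  have h4 : (1:ℝ) ≤ ‖((Real.sqrt 2 : ℝ):ℂ)‖ := by
    rw [Complex.norm_real, Real.norm_eq_abs, _root_.abs_of_nonneg (Real.sqrt_nonneg 2)]
    nlinarith [Real.sq_sqrt (by norm_num : (0:ℝ) ≤ 2), Real.sqrt_nonneg 2]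
  have h5 : ‖((u.1 : ℂ) - Complex.I * (u.2 : ℂ))‖ / ‖((Real.sqrt 2 : ℝ):ℂ)‖
      ≤ |u.1| + |u.2| := by
    rw [div_le_iff₀ (by linarith)]
    calc ‖((u.1 : ℂ) - Complex.I * (u.2 : ℂ))‖ ≤ |u.1| + |u.2| := by
          rw [← h2, ← h3]; exact h1
      _ ≤ (|u.1| + |u.2|) * ‖((Real.sqrt 2 : ℝ):ℂ)‖ := by
          nlinarith [abs_nonneg u.1, abs_nonneg u.2]
  apply h5.trans
  nlinarith [abs_nonneg u.1, abs_nonneg u.2, _root_.sq_abs u.1, _root_.sq_abs u.2,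
    sq_nonneg (1 - |u.1|), sq_nonneg (1 - |u.2|), sq_nonneg (|u.1| - |u.2|),
    sq_nonneg (|u.1| + |u.2|), sq_nonneg (|u.1| * |u.2|)]

lemma norm_aop (u : ℝ × ℝ) : ‖aop u‖ ≤ 2*(1+u.1^2)*(1+u.2^2) := by
  have : ‖aop u‖ = ‖abar u‖ := by
    unfold aop abar
    rw [norm_div, norm_div]
    congr 1
    have : ((u.1 : ℂ) + Complex.I * (u.2 : ℂ))
        = (starRingEnd ℂ) ((u.1 : ℂ) - Complex.I * (u.2 : ℂ)) := by
      rw [map_sub, Complex.conj_ofReal, map_mul, Complex.conj_I, Complex.conj_ofReal]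
      ring
    rw [this, RCLike.norm_conj]
  rw [this]; exact norm_abar u

lemma integrable_key (A B : ℕ) :
    Integrable (fun u => abar u ^ A * aop u ^ B * (f0 u * f0 u)) mes2 := by
  have hG : Integrable (fun u : ℝ × ℝ =>
      ((2:ℝ)^(A+B)*4) * (((1+u.1^2)^(A+B) * Real.exp (-u.1^2))
        * ((1+u.2^2)^(A+B) * Real.exp (-u.2^2)))) (volume : Measure (ℝ × ℝ)) := by
    rw [Measure.volume_eq_prod]
    exact ((int1D (A+B)).mul_prod (int1D (A+B))).const_mul _
  have hcont : Continuous (fun u : ℝ × ℝ => abar u ^ A * aop u ^ B * (f0 u * f0 u)) := by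
    unfold abar aop f0
    fun_prop
  have hbound : ∀ u : ℝ × ℝ, ‖abar u ^ A * aop u ^ B * (f0 u * f0 u)‖
      ≤ ((2:ℝ)^(A+B)*4) * (((1+u.1^2)^(A+B) * Real.exp (-u.1^2))
        * ((1+u.2^2)^(A+B) * Real.exp (-u.2^2))) := by
    intro u
    have hs : (0:ℝ) ≤ 2*(1+u.1^2)*(1+u.2^2) := by positivity
    rw [norm_mul, norm_mul, norm_mul, norm_pow, norm_pow, norm_f0]
    calc ‖abar u‖^A * ‖aop u‖^B * (((2 * Real.exp (-(u.1^2+u.2^2)/2)))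
          * (2 * Real.exp (-(u.1^2+u.2^2)/2)))
        ≤ (2*(1+u.1^2)*(1+u.2^2))^A * (2*(1+u.1^2)*(1+u.2^2))^B
          * ((2 * Real.exp (-(u.1^2+u.2^2)/2)) * (2 * Real.exp (-(u.1^2+u.2^2)/2))) := by
          have he : (0:ℝ) < 2 * Real.exp (-(u.1^2+u.2^2)/2) := by positivity
          gcongr <;> first
          | exact norm_nonneg _
          | exact norm_abar u
          | exact norm_aop u
      _ = ((2:ℝ)^(A+B)*4) * (((1+u.1^2)^(A+B) * Real.exp (-u.1^2))
          * ((1+u.2^2)^(A+B) * Real.exp (-u.2^2))) := by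
          have hee : Real.exp (-(u.1^2+u.2^2)/2) * Real.exp (-(u.1^2+u.2^2)/2)
              = Real.exp (-u.1^2) * Real.exp (-u.2^2) := by
            rw [← Real.exp_add, ← Real.exp_add]; congr 1; ring
          rw [← pow_add, mul_pow, mul_pow]
          linear_combination ((2:ℝ)^(A+B)*(1+u.1^2)^(A+B)*(1+u.2^2)^(A+B)*4) * hee
  have hvol : Integrable (fun u => abar u ^ A * aop u ^ B * (f0 u * f0 u))
      (volume : Measure (ℝ × ℝ)) :=
    hG.mono' hcont.aestronglyMeasurable (Filter.Eventually.of_forall hbound)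
  rw [mes2]
  exact hvol.smul_measure (ENNReal.inv_ne_top.mpr (by
    simp only [Ne, ENNReal.ofReal_eq_zero, not_le]
    linarith [Real.pi_pos]))


lemma conj_abar (u : ℝ × ℝ) : (starRingEnd ℂ) (abar u) = aop u := by
  unfold abar aop
  rw [map_div₀, map_sub, map_mul, Complex.conj_ofReal, Complex.conj_ofReal,
    Complex.conj_I, Complex.conj_ofReal]
  ring

lemma conj_aop (u : ℝ × ℝ) : (starRingEnd ℂ) (aop u) = abar u := by
  unfold abar aop
  rw [map_div₀, map_add, map_mul, Complex.conj_ofReal, Complex.conj_ofReal,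
    Complex.conj_I, Complex.conj_ofReal]
  ring

lemma conj_f0 (u : ℝ × ℝ) : (starRingEnd ℂ) (f0 u) = f0 u := by
  unfold f0
  rw [show (-((u.1 ^ 2 + u.2 ^ 2 : ℝ) : ℂ)) / 2 = (((-(u.1^2+u.2^2)/2 : ℝ)) : ℂ) by
    push_cast; ring]
  rw [map_mul, ← Complex.exp_conj, Complex.conj_ofReal, map_ofNat]

lemma conj_fmn (m n : ℕ) (u : ℝ × ℝ) : (starRingEnd ℂ) (fmn m n u) = fmn n m u := by
  unfold fmn
  rw [map_mul, map_inv₀, Complex.conj_ofReal, map_sum]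
  rw [show (2:ℝ) ^ (m + n) * m.factorial * n.factorial
      = 2 ^ (n + m) * n.factorial * m.factorial by rw [add_comm]; ring]
  congr 1
  rw [min_comm m n]
  apply Finset.sum_congr rfl
  intro j _
  simp only [map_mul, map_pow, map_natCast, map_ofNat, map_neg, map_one]
  rw [conj_abar, conj_aop, conj_f0, add_comm m n]
  ring

def cfC (a b j : ℕ) : ℂ :=
  (-1:ℂ)^j * (a.choose j : ℂ) * (b.choose j : ℂ) * (j.factorial : ℂ) * 2^(a+b-j)

lemma fmn_eq (a b : ℕ) (u : ℝ × ℝ) :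
    fmn a b u = ((Real.sqrt (2 ^ (a + b) * a.factorial * b.factorial) : ℝ) : ℂ)⁻¹ *
      ∑ j ∈ Finset.range (min a b + 1),
        cfC a b j * (abar u ^ (a - j) * aop u ^ (b - j) * f0 u) := by
  unfold fmn cfC
  congr 1
  apply Finset.sum_congr rfl
  intro j _
  ring

theorem fmn_orthonormal (m n k l : ℕ) :
    ((1 : ℂ) / 2) * ∫ u, (starRingEnd ℂ) (fmn m n u) * fmn k l u ∂mes2
      = if m = k ∧ n = l then 1 else 0 := by
  set C0 : ℂ := ((Real.sqrt (2 ^ (n + m) * n.factorial * m.factorial) : ℝ) : ℂ)⁻¹ *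
      ((Real.sqrt (2 ^ (k + l) * k.factorial * l.factorial) : ℝ) : ℂ)⁻¹ with hC0
  have expand : ∀ u, (starRingEnd ℂ) (fmn m n u) * fmn k l u
      = ∑ j ∈ Finset.range (min n m + 1), ∑ i ∈ Finset.range (min k l + 1),
          (C0 * (cfC n m j * cfC k l i)) *
            (abar u ^ ((n-j)+(k-i)) * aop u ^ ((m-j)+(l-i)) * (f0 u * f0 u)) := by
    intro u
    rw [conj_fmn, fmn_eq, fmn_eq, mul_mul_mul_comm, Finset.sum_mul_sum, Finset.mul_sum]
    apply Finset.sum_congr rfl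
    intro j _
    rw [Finset.mul_sum]
    apply Finset.sum_congr rfl
    intro i _
    rw [pow_add, pow_add, hC0]
    ring
  simp only [expand]
  rw [integral_finset_sum _ (fun j _ => integrable_finset_sum _
    (fun i _ => (integrable_key ((n-j)+(k-i)) ((m-j)+(l-i))).const_mul _))]
  have inner_eval : ∀ j ∈ Finset.range (min n m + 1),
      ∫ u, ∑ i ∈ Finset.range (min k l + 1),
        (C0 * (cfC n m j * cfC k l i)) *
          (abar u ^ ((n-j)+(k-i)) * aop u ^ ((m-j)+(l-i)) * (f0 u * f0 u)) ∂mes2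
      = ∑ i ∈ Finset.range (min k l + 1),
          (C0 * (cfC n m j * cfC k l i)) *
            (if (n-j)+(k-i) = (m-j)+(l-i)
              then 2 * ((((n-j)+(k-i)).factorial : ℕ) : ℂ) / 2^((n-j)+(k-i)) else 0) := by
    intro j _
    rw [integral_finset_sum _
      (fun i _ => (integrable_key ((n-j)+(k-i)) ((m-j)+(l-i))).const_mul _)]
    apply Finset.sum_congr rfl
    intro i _
    rw [integral_const_mul, key]
  rw [Finset.sum_congr rfl inner_eval]
  by_cases hnk : n + k = m + l
  · have hcond : ∀ j ∈ Finset.range (min n m + 1), ∀ i ∈ Finset.range (min k l + 1),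
        (n-j)+(k-i) = (m-j)+(l-i) := by
      intro j hj i hi
      simp only [Finset.mem_range] at hj hi
      omega
    have hterm : ∀ j ∈ Finset.range (min n m + 1), ∀ i ∈ Finset.range (min k l + 1),
        (C0 * (cfC n m j * cfC k l i)) *
          (if (n-j)+(k-i) = (m-j)+(l-i)
            then 2 * ((((n-j)+(k-i)).factorial : ℕ) : ℂ) / 2^((n-j)+(k-i)) else 0)
        = (C0 * 2^(m+l+1)) *
            ((-1:ℂ)^j * (m.choose j : ℂ) * (n.choose j : ℂ) * (j.factorial : ℂ) *
              ((-1:ℂ)^i * (k.choose i : ℂ) * (l.choose i : ℂ) * (i.factorial : ℂ)) *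
                ((((n - j) + (k - i)).factorial : ℕ) : ℂ)) := by
      intro j hj i hi
      simp only [Finset.mem_range] at hj hi
      rw [if_pos (hcond j (by simp; omega) i (by simp; omega))]
      have h2A : (2:ℂ)^((n-j)+(k-i)) ≠ 0 := pow_ne_zero _ two_ne_zero
      have h2a : (2:ℂ)^(n+m-j) ≠ 0 := pow_ne_zero _ two_ne_zero
      have h2b : (2:ℂ)^(k+l-i) ≠ 0 := pow_ne_zero _ two_ne_zero
      have hpow : (2:ℂ)^(n+m-j) * (2:ℂ)^(k+l-i) = 2^(m+l) * 2^((n-j)+(k-i)) := by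
        rw [← pow_add, ← pow_add]
        congr 1
        omega
      have key2 : (2:ℂ) * ((((n-j)+(k-i)).factorial : ℕ) : ℂ) / 2^((n-j)+(k-i))
          = 2^(m+l+1) * ((((n-j)+(k-i)).factorial : ℕ) : ℂ)
              / ((2:ℂ)^(n+m-j) * (2:ℂ)^(k+l-i)) := by
        rw [div_eq_div_iff h2A (mul_ne_zero h2a h2b)]
        rw [pow_succ]
        linear_combination (2 * ((((n-j)+(k-i)).factorial : ℕ) : ℂ)) * hpow
      rw [key2]
      unfold cfC
      field_simp
    rw [Finset.sum_congr rfl (fun j hj => Finset.sum_congr rfl (fun i hi => hterm j hj i hi))]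
    have pull : ∑ j ∈ Finset.range (min n m + 1), ∑ i ∈ Finset.range (min k l + 1),
        (C0 * 2^(m+l+1)) *
          ((-1:ℂ)^j * (m.choose j : ℂ) * (n.choose j : ℂ) * (j.factorial : ℂ) *
            ((-1:ℂ)^i * (k.choose i : ℂ) * (l.choose i : ℂ) * (i.factorial : ℂ)) *
              ((((n - j) + (k - i)).factorial : ℕ) : ℂ))
        = (C0 * 2^(m+l+1)) *
            ∑ j ∈ Finset.range (min m n + 1), ∑ i ∈ Finset.range (min k l + 1),
              ((-1:ℂ)^j * (m.choose j : ℂ) * (n.choose j : ℂ) * (j.factorial : ℂ) *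
                ((-1:ℂ)^i * (k.choose i : ℂ) * (l.choose i : ℂ) * (i.factorial : ℂ)) *
                  ((((n - j) + (k - i)).factorial : ℕ) : ℂ)) := by
      rw [Finset.mul_sum, min_comm n m]
      apply Finset.sum_congr rfl
      intro j _
      rw [Finset.mul_sum]
    rw [pull, TT m n k l hnk]
    by_cases hmk : m = k
    · have hnl : n = l := by omega
      subst hmk; subst hnl
      rw [if_pos (And.intro rfl rfl), if_pos (rfl : m = m)]
      have hre : (2:ℝ) ^ (m + n) * m.factorial * n.factorial
          = 2 ^ (n + m) * n.factorial * m.factorial := by rw [add_comm m n]; ring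
      have hxpos : (0:ℝ) < 2 ^ (n + m) * n.factorial * m.factorial := by positivity
      have hC0' : C0 = (((2:ℝ) ^ (n + m) * n.factorial * m.factorial : ℝ) : ℂ)⁻¹ := by
        rw [hC0, hre, ← mul_inv, ← Complex.ofReal_mul,
          Real.mul_self_sqrt hxpos.le]
      have hxne : (((2:ℝ) ^ (n + m) * n.factorial * m.factorial : ℝ) : ℂ) ≠ 0 := by
        exact_mod_cast ne_of_gt hxpos
      have hXval : (((2:ℝ) ^ (n + m) * n.factorial * m.factorial : ℝ) : ℂ)
          = (1/2) * ((2:ℂ)^(m+n+1) * ((m.factorial * n.factorial : ℕ) : ℂ)) := by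
        push_cast
        ring
      rw [hC0', show (1:ℂ)/2 * ((((2:ℝ) ^ (n + m) * n.factorial * m.factorial : ℝ) : ℂ)⁻¹
            * 2^(m+n+1) * ((m.factorial * n.factorial : ℕ) : ℂ))
          = (((2:ℝ) ^ (n + m) * n.factorial * m.factorial : ℝ) : ℂ)⁻¹
            * ((1/2) * ((2:ℂ)^(m+n+1) * ((m.factorial * n.factorial : ℕ) : ℂ))) by ring,
        ← hXval, inv_mul_cancel₀ hxne]
    · rw [if_neg hmk, if_neg (by tauto)]
      ring
  · have hz : ∀ j ∈ Finset.range (min n m + 1), ∑ i ∈ Finset.range (min k l + 1),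
        (C0 * (cfC n m j * cfC k l i)) *
          (if (n-j)+(k-i) = (m-j)+(l-i)
            then 2 * ((((n-j)+(k-i)).factorial : ℕ) : ℂ) / 2^((n-j)+(k-i)) else 0)
        = 0 := by
      intro j hj
      apply Finset.sum_eq_zero
      intro i hi
      simp only [Finset.mem_range] at hj hi
      rw [if_neg (by omega), mul_zero]
    rw [Finset.sum_congr rfl hz]
    rw [if_neg (by omega)]
    simp
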